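/- Define E(z) := ∫₀^{π/2} e( sin²θ / z ) sin θ dθ for z > 0. There is an absolute constant C such that |E(z)| ≤ C · min(1, z^{1/2}) for all z > 0. -/

import Mathlib

open MeasureTheory intervalIntegral

/-- `e(x) = exp(2πix)`. -/
noncomputable def e (x : ℝ) : ℂ := Complex.exp (2 * Real.pi * Complex.I * x)

/-- `E(z) = ∫₀^{π/2} e(sin²θ/z) sin θ dθ`. -/
noncomputable def Efun (z : ℝ) : ℂ :=
  ∫ θ in (0 : ℝ)..(Real.pi / 2), e (Real.sin θ ^ 2 / z) * (Real.sin θ : ℂ)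

lemma norm_e (x : ℝ) : ‖e x‖ = 1 := by
  simp [e, Complex.norm_exp]

lemma continuous_e : Continuous e := by unfold e; fun_prop

lemma e_add (x y : ℝ) : e (x + y) = e x * e y := by
  rw [e, e, e, ← Complex.exp_add]; push_cast; ring_nf

lemma Efun_eq (z : ℝ) : Efun z = ∫ u in (0:ℝ)..1, e ((1 - u^2)/z) := by
  have h := intervalIntegral.integral_comp_smul_deriv (a := 0) (b := Real.pi/2)
    (f := Real.cos) (f' := fun θ => -Real.sin θ) (g := fun u => e ((1 - u^2)/z))
    (fun x _ => (Real.hasDerivAt_cos x))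
    (by fun_prop)
    (continuous_e.comp (by fun_prop))
  simp only [Real.cos_zero, Real.cos_pi_div_two] at h
  rw [intervalIntegral.integral_symm (a := 0) (b := 1)] at h
  rw [← neg_neg (∫ u in (0:ℝ)..1, e ((1 - u^2)/z)), ← h, Efun, ← intervalIntegral.integral_neg]
  apply intervalIntegral.integral_congr
  intro θ hθ
  simp only [Function.comp_apply, neg_smul, neg_neg, Complex.real_smul]
  rw [Real.cos_sq']
  ring

section osc
variable (z : ℝ)

noncomputable def Kc : ℂ := -2*(Real.pi:ℂ)*Complex.I/(z:ℂ)

lemma e_exp (t : ℝ) : e (-(t^2)/z) = Complex.exp (Kc z * (t:ℂ)^2) := by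
  rw [e, Kc]; congr 1; push_cast; ring

lemma norm_twoK (hz : 0 < z) : ‖2 * Kc z‖ = 4*Real.pi/z := by
  rw [Kc]
  rw [norm_mul, norm_div, norm_mul, norm_mul]
  simp [abs_of_pos hz, Real.pi_pos.le, abs_of_nonneg Real.pi_pos.le]
  ring

lemma hK_ne (hz : 0 < z) : 2 * Kc z ≠ 0 := by
  intro h
  have h2 := norm_twoK z hz
  rw [h, norm_zero] at h2
  have : (0:ℝ) < 4*Real.pi/z := by positivity
  linarith [this]

noncomputable def F (t : ℝ) : ℂ := Complex.exp (Kc z * (t:ℂ)^2)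
noncomputable def F' (t : ℝ) : ℂ := Complex.exp (Kc z * (t:ℂ)^2) * (2 * Kc z * (t:ℂ))
noncomputable def W (t : ℝ) : ℂ := (2 * Kc z * (t:ℂ))⁻¹
noncomputable def W' (t : ℝ) : ℂ := -(2 * Kc z) / (2 * Kc z * (t:ℂ))^2

lemma hF (t : ℝ) : HasDerivAt (F z) (F' z t) t := by
  have h2 := (((hasDerivAt_pow 2 ((t:ℂ))).const_mul (Kc z)).cexp).comp_ofReal
  convert h2 using 1
  · rfl
  rw [F']; ring

lemma hW (t : ℝ) (ht : t ≠ 0) (hz : 0 < z) : HasDerivAt (W z) (W' z t) t := by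
  have h1 := ((((hasDerivAt_id ((t:ℂ))).const_mul (2 * Kc z)).inv (by
    exact mul_ne_zero (hK_ne z hz) (Complex.ofReal_ne_zero.mpr ht))).comp_ofReal)
  convert h1 using 1
  · rfl
  rw [W']; field_simp; rfl

lemma norm_F (t : ℝ) : ‖F z t‖ = 1 := by rw [F, ← e_exp]; exact norm_e _

lemma norm_W (t : ℝ) (ht : 0 < t) (hz : 0 < z) : ‖W z t‖ = z/(4*Real.pi*t) := by
  rw [W, norm_inv, norm_mul, norm_twoK z hz, Complex.norm_real, Real.norm_eq_abs,
    abs_of_pos ht, div_mul_eq_mul_div, inv_div]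

lemma norm_W' (t : ℝ) (ht : 0 < t) (hz : 0 < z) :
    ‖W' z t‖ = (z/(4*Real.pi)) * (t^2)⁻¹ := by
  have hπ := Real.pi_pos
  have h1 : ‖2 * Kc z * (t:ℂ)‖ = 4*Real.pi/z * t := by
    rw [norm_mul, norm_twoK z hz, Complex.norm_real, Real.norm_eq_abs, abs_of_pos ht]
  rw [W', norm_div, norm_neg, norm_pow, h1, norm_twoK z hz]
  field_simp

lemma continuous_F' : Continuous (F' z) := by
  unfold F'
  fun_prop

lemma osc_part (hz : 0 < z) {δ : ℝ} (h0 : 0 < δ) (h1 : δ ≤ 1) :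
    ‖∫ t in δ..1, e (-(t^2)/z)‖ ≤
      z/(4*Real.pi) + z/(4*Real.pi*δ) + (z/(4*Real.pi)) * (δ⁻¹ - 1) := by
  have hπ := Real.pi_pos
  have huIcc : Set.uIcc δ 1 = Set.Icc δ 1 := Set.uIcc_of_le h1
  have hpos : ∀ t ∈ Set.uIcc δ 1, 0 < t := by
    rw [huIcc]; intro t ht; exact lt_of_lt_of_le h0 ht.1
  have hW'cont : ContinuousOn (W' z) (Set.uIcc δ 1) := by
    apply ContinuousOn.div continuousOn_const (by fun_prop)
    intro t ht
    exact pow_ne_zero _ (mul_ne_zero (hK_ne z hz)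
      (Complex.ofReal_ne_zero.mpr (hpos t ht).ne'))
  have hW'int : IntervalIntegrable (W' z) volume δ 1 := hW'cont.intervalIntegrable
  have hF'int : IntervalIntegrable (F' z) volume δ 1 :=
    (continuous_F' z).intervalIntegrable _ _
  have hparts := intervalIntegral.integral_mul_deriv_eq_deriv_mul
    (u := W z) (u' := W' z) (v := F z) (v' := F' z)
    (fun t ht => hW z t (hpos t ht).ne' hz) (fun t _ => hF z t) hW'int hF'int
  have heq : (∫ t in δ..1, e (-(t^2)/z)) = ∫ t in δ..1, W z t * F' z t := by
    apply intervalIntegral.integral_congr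
    intro t ht
    show e (-(t^2)/z) = W z t * F' z t
    rw [e_exp, W, F']
    have h2 : 2 * Kc z * (t:ℂ) ≠ 0 :=
      mul_ne_zero (hK_ne z hz) (Complex.ofReal_ne_zero.mpr (hpos t ht).ne')
    field_simp
    have h3 : Kc z * (t:ℂ) ≠ 0 := by intro h; apply h2; rw [mul_assoc, h, mul_zero]
    exact (div_self h3).symm
  rw [heq, hparts]
  have hb1 : ‖W z 1 * F z 1‖ = z/(4*Real.pi) := by
    rw [norm_mul, norm_F, mul_one, norm_W z 1 one_pos hz, mul_one]
  have hb2 : ‖W z δ * F z δ‖ = z/(4*Real.pi*δ) := by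
    rw [norm_mul, norm_F, mul_one, norm_W z δ h0 hz]
  have hb3 : ‖∫ t in δ..1, W' z t * F z t‖ ≤ (z/(4*Real.pi)) * (δ⁻¹ - 1) := by
    calc ‖∫ t in δ..1, W' z t * F z t‖
        ≤ ∫ t in δ..1, ‖W' z t * F z t‖ :=
          intervalIntegral.norm_integral_le_integral_norm h1
      _ = ∫ t in δ..1, (z/(4*Real.pi)) * (t^2)⁻¹ := by
          apply intervalIntegral.integral_congr
          intro t ht
          show ‖W' z t * F z t‖ = z/(4*Real.pi) * (t^2)⁻¹
          rw [norm_mul, norm_F, mul_one, norm_W' z t (hpos t ht) hz]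
      _ = (z/(4*Real.pi)) * ∫ t in δ..1, (t^2)⁻¹ :=
          intervalIntegral.integral_const_mul _ _
      _ ≤ (z/(4*Real.pi)) * (δ⁻¹ - 1) := by
          apply mul_le_mul_of_nonneg_left _ (by positivity)
          have hderiv : ∀ t ∈ Set.uIcc δ 1, HasDerivAt (fun y : ℝ => -y⁻¹) ((t^2)⁻¹) t := by
            intro t ht
            have := (hasDerivAt_inv (hpos t ht).ne').neg
            exact this.congr_deriv (by ring)
          have hint : IntervalIntegrable (fun t : ℝ => (t^2)⁻¹) volume δ 1 := by
            apply ContinuousOn.intervalIntegrable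
            apply ContinuousOn.inv₀ (by fun_prop)
            intro t ht
            exact pow_ne_zero _ (hpos t ht).ne'
          rw [intervalIntegral.integral_eq_sub_of_hasDerivAt hderiv hint]
          simp
  calc ‖W z 1 * F z 1 - W z δ * F z δ - ∫ t in δ..1, W' z t * F z t‖
      ≤ ‖W z 1 * F z 1 - W z δ * F z δ‖ + ‖∫ t in δ..1, W' z t * F z t‖ := norm_sub_le _ _
    _ ≤ ‖W z 1 * F z 1‖ + ‖W z δ * F z δ‖ + ‖∫ t in δ..1, W' z t * F z t‖ := by
        have := norm_sub_le (W z 1 * F z 1) (W z δ * F z δ)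
        linarith
    _ ≤ z/(4*Real.pi) + z/(4*Real.pi*δ) + (z/(4*Real.pi)) * (δ⁻¹ - 1) := by
        rw [hb1, hb2]; linarith

end osc

lemma Efun_norm_eq (z : ℝ) : ‖Efun z‖ = ‖∫ u in (0:ℝ)..1, e (-(u^2)/z)‖ := by
  rw [Efun_eq]
  have h : ∀ u : ℝ, e ((1 - u^2)/z) = e (1/z) * e (-(u^2)/z) := by
    intro u
    rw [← e_add]
    congr 1
    ring
  simp_rw [h]
  rw [intervalIntegral.integral_const_mul, norm_mul, norm_e, one_mul]

lemma cont_integrand (z : ℝ) : Continuous (fun u : ℝ => e (-(u^2)/z)) :=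
  continuous_e.comp (by fun_prop)

lemma trivial_bound (z : ℝ) : ‖∫ u in (0:ℝ)..1, e (-(u^2)/z)‖ ≤ 1 := by
  have := intervalIntegral.norm_integral_le_of_norm_le_const (a := (0:ℝ)) (b := 1) (C := 1)
    (f := fun u : ℝ => e (-(u^2)/z)) (fun x _ => le_of_eq (norm_e _))
  simpa using this

lemma prefix_bound (z δ : ℝ) (h0 : 0 ≤ δ) : ‖∫ u in (0:ℝ)..δ, e (-(u^2)/z)‖ ≤ δ := by
  have := intervalIntegral.norm_integral_le_of_norm_le_const (a := (0:ℝ)) (b := δ) (C := 1)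
    (f := fun u : ℝ => e (-(u^2)/z)) (fun x _ => le_of_eq (norm_e _))
  simpa [abs_of_nonneg h0] using this

lemma small_z (z : ℝ) (hz : 0 < z) (hz1 : z ≤ 1) :
    ‖∫ u in (0:ℝ)..1, e (-(u^2)/z)‖ ≤ 2 * Real.sqrt z := by
  have hπ := Real.pi_gt_three
  set δ := Real.sqrt z with hδ
  have h0 : 0 < δ := Real.sqrt_pos.mpr hz
  have h1 : δ ≤ 1 := Real.sqrt_le_one.mpr hz1
  have hδδ : δ * δ = z := Real.mul_self_sqrt hz.le
  have hsplit : (∫ u in (0:ℝ)..1, e (-(u^2)/z))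
      = (∫ u in (0:ℝ)..δ, e (-(u^2)/z)) + ∫ u in δ..1, e (-(u^2)/z) :=
    (intervalIntegral.integral_add_adjacent_intervals
      ((cont_integrand z).intervalIntegrable _ _)
      ((cont_integrand z).intervalIntegrable _ _)).symm
  rw [hsplit]
  have hA := prefix_bound z δ h0.le
  have hB := osc_part z hz h0 h1
  have hval : z/(4*Real.pi) + z/(4*Real.pi*δ) + (z/(4*Real.pi)) * (δ⁻¹ - 1) = δ/(2*Real.pi) := by
    have hz' : z = δ * δ := hδδ.symm
    rw [hz']
    field_simp
    ring
  rw [hval] at hB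
  have : δ/(2*Real.pi) ≤ δ := by
    rw [div_le_iff₀ (by linarith)]
    nlinarith
  calc ‖(∫ u in (0:ℝ)..δ, e (-(u^2)/z)) + ∫ u in δ..1, e (-(u^2)/z)‖
      ≤ ‖∫ u in (0:ℝ)..δ, e (-(u^2)/z)‖ + ‖∫ u in δ..1, e (-(u^2)/z)‖ := norm_add_le _ _
    _ ≤ δ + δ := by linarith
    _ = 2 * Real.sqrt z := by rw [← hδ]; ring

/-- There is an absolute constant `C` with
`|E(z)| ≤ C · min(1, √z)` for all `z > 0`. -/
theorem Efun_bound :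
    ∃ C : ℝ, ∀ z : ℝ, 0 < z → ‖Efun z‖ ≤ C * min 1 (Real.sqrt z) := by
  refine ⟨2, fun z hz => ?_⟩
  rw [Efun_norm_eq]
  rcases le_or_gt z 1 with h | h
  · have hmin : min 1 (Real.sqrt z) = Real.sqrt z :=
      min_eq_right (Real.sqrt_le_one.mpr h)
    rw [hmin]
    exact small_z z hz h
  · have hmin : min 1 (Real.sqrt z) = 1 := by
      apply min_eq_left
      rw [show (1:ℝ) = Real.sqrt 1 by simp]
      exact Real.sqrt_le_sqrt h.le
    rw [hmin, mul_one]
    linarith [trivial_bound z]
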